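/- arXiv:1809.09891 — 2 statements merged into one kernel-verified Lean document; each statement's English description precedes it below -/
import Mathlib

section
/- Let z(k) be generated by z(k+1) = (1-α) z(k) + α T(z(k)) with T nonexpansive on R^d, Fix(T) ≠ ∅, and α ∈ (0,1). Then ‖T(z(k)) - z(k)‖ → 0 as k → ∞ (asymptotic regularity of the Krasnosel'skii–Mann iteration in finite dimension). -/
open Filter

lemma km_key {E : Type*} [NormedAddCommGroup E] [InnerProductSpace ℝ E]
    (a b : E) (α : ℝ) :
    ‖(1-α)•a + α•b‖^2 = (1-α)*‖a‖^2 + α*‖b‖^2 - α*(1-α)*‖a-b‖^2 := by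
  simp only [← real_inner_self_eq_norm_sq, inner_add_add_self, inner_sub_sub_self,
    real_inner_smul_left, real_inner_smul_right]
  ring

/-- Asymptotic regularity of the Krasnosel'skii–Mann iteration: for `T`
nonexpansive on `ℝ^d` with a fixed point and `α ∈ (0,1)`, the iterates
`z(k+1) = (1-α) z(k) + α T(z(k))` satisfy `‖T(z(k)) - z(k)‖ → 0`. -/
theorem stmt12 (d : ℕ)
    (T : EuclideanSpace ℝ (Fin d) → EuclideanSpace ℝ (Fin d))
    (hT : ∀ x y, ‖T x - T y‖ ≤ ‖x - y‖)
    (zstar : EuclideanSpace ℝ (Fin d)) (hz : T zstar = zstar)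
    (α : ℝ) (hα0 : 0 < α) (hα1 : α < 1)
    (z : ℕ → EuclideanSpace ℝ (Fin d))
    (hiter : ∀ k, z (k + 1) = (1 - α) • z k + α • T (z k)) :
    Tendsto (fun k => ‖T (z k) - z k‖) atTop (nhds 0) := by
  set e : ℕ → ℝ := fun k => ‖z k - zstar‖^2 with he
  set c : ℕ → ℝ := fun k => α * (1-α) * ‖T (z k) - z k‖^2 with hc
  have hα1' : 0 < 1 - α := by linarith
  have hcnonneg : ∀ k, 0 ≤ c k := fun k => by positivity
  -- per-step inequality
  have hstep : ∀ k, e (k+1) + c k ≤ e k := by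
    intro k
    have h1 : z (k+1) - zstar = (1-α) • (z k - zstar) + α • (T (z k) - zstar) := by
      rw [hiter k]
      module
    have h2 : e (k+1) = (1-α)*‖z k - zstar‖^2 + α*‖T (z k) - zstar‖^2
        - α*(1-α)*‖(z k - zstar) - (T (z k) - zstar)‖^2 := by
      rw [he]; simp only [h1]; exact km_key _ _ α
    have h3 : (z k - zstar) - (T (z k) - zstar) = z k - T (z k) := by abel
    have h4 : ‖z k - T (z k)‖ = ‖T (z k) - z k‖ := norm_sub_rev _ _
    have h5 : ‖T (z k) - zstar‖ ≤ ‖z k - zstar‖ := by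
      have := hT (z k) zstar; rwa [hz] at this
    have h6 : ‖T (z k) - zstar‖^2 ≤ ‖z k - zstar‖^2 := by
      exact pow_le_pow_left₀ (norm_nonneg _) h5 2
    rw [h2, h3, h4]
    have : α*‖T (z k) - zstar‖^2 ≤ α*‖z k - zstar‖^2 :=
      mul_le_mul_of_nonneg_left h6 hα0.le
    simp only [he, hc]
    nlinarith [norm_nonneg (z k - zstar)]
  -- partial sums bounded
  have hsum : ∀ n, ∑ i ∈ Finset.range n, c i ≤ e 0 := by
    have key : ∀ n, ∑ i ∈ Finset.range n, c i + e n ≤ e 0 := by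
      intro n
      induction n with
      | zero => simp
      | succ n ih =>
        rw [Finset.sum_range_succ]
        have := hstep n
        linarith
    intro n
    have := key n
    have : 0 ≤ e n := by positivity
    linarith [key n]
  have hsummable : Summable c := summable_of_sum_range_le hcnonneg hsum
  have hc0 : Tendsto c atTop (nhds 0) := hsummable.tendsto_atTop_zero
  -- divide out the constant
  have hg0 : Tendsto (fun k => ‖T (z k) - z k‖^2) atTop (nhds 0) := by
    have hpos : (0:ℝ) < α * (1-α) := by positivity
    have := hc0.const_mul (α * (1-α))⁻¹
    simp only [mul_zero] at this
    convert this using 2 with k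
    field_simp
    simp only [hc]; ring
  -- take square roots
  have := (Real.continuous_sqrt.tendsto 0).comp hg0
  simp only [Real.sqrt_zero] at this
  convert this using 2 with k
  simp [Real.sqrt_sq (norm_nonneg _)]
end

section
/- Expected one-step contraction toward fixed points under i.i.d. Bernoulli coordinate updates: let T be nonexpansive on R^d with fixed point z*, α ∈ (0,1), and suppose each coordinate independently applies the update (1-α)z_i + α(Tz)_i with probability 1-p (else keeps z_i). Then the expected squared distance satisfies E‖z' - z*‖² ≤ ‖z - z*‖² - (1-p) α(1-α) ‖T z - z‖², where the expectation is over the Bernoulli loss variables. -/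
open Finset

lemma aux1 {ι : Type*} [Fintype ι] [DecidableEq ι] (f g : ι → ℝ) :
    ∑ S : Finset ι, (∏ j ∈ S, f j) * (∏ j ∈ Sᶜ, g j) = ∏ j, (f j + g j) := by
  have h := Finset.prod_add f g Finset.univ
  rw [h, Finset.powerset_univ]
  refine Finset.sum_congr rfl fun S _ => ?_
  rw [Finset.compl_eq_univ_sdiff]

lemma aux2 (d : ℕ) (p : ℝ) (i : Fin d) (a b : ℝ) :
    ∑ S : Finset (Fin d), ((1 - p) ^ S.card * p ^ (d - S.card)) * (if i ∈ S then a else b)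
      = (1 - p) * a + p * b := by
  set f : Fin d → ℝ := fun j => if j = i then (1 - p) * a else (1 - p) with hf
  set g : Fin d → ℝ := fun j => if j = i then p * b else p with hg
  have key : ∀ S : Finset (Fin d),
      ((1 - p) ^ S.card * p ^ (d - S.card)) * (if i ∈ S then a else b)
        = (∏ j ∈ S, f j) * (∏ j ∈ Sᶜ, g j) := by
    intro S
    have h1 : ∏ j ∈ S, f j = (1 - p) ^ S.card * (if i ∈ S then a else 1) := by
      have : ∀ j ∈ S, f j = (1 - p) * (if j = i then a else 1) := by
        intro j _; simp only [hf]; split <;> simp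
      rw [Finset.prod_congr rfl this, Finset.prod_mul_distrib, Finset.prod_const,
        Finset.prod_ite_eq' S i (fun _ => a)]
    have h2 : ∏ j ∈ Sᶜ, g j = p ^ (d - S.card) * (if i ∈ S then 1 else b) := by
      have : ∀ j ∈ Sᶜ, g j = p * (if j = i then b else 1) := by
        intro j _; simp only [hg]; split <;> simp
      rw [Finset.prod_congr rfl this, Finset.prod_mul_distrib, Finset.prod_const,
        Finset.prod_ite_eq' Sᶜ i (fun _ => b), Finset.card_compl, Fintype.card_fin]
      by_cases h : i ∈ S <;> simp [h]
    rw [h1, h2]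
    by_cases h : i ∈ S <;> simp [h] <;> ring
  rw [Finset.sum_congr rfl (fun S _ => key S), aux1 f g]
  have : ∀ j : Fin d, f j + g j = if j = i then (1 - p) * a + p * b else 1 := by
    intro j; simp only [hf, hg]; split <;> ring
  rw [Finset.prod_congr rfl (fun j _ => this j), Finset.prod_ite_eq' Finset.univ i
    (fun _ => (1 - p) * a + p * b)]
  simp

lemma normsq (d : ℕ) (x : EuclideanSpace ℝ (Fin d)) : ‖x‖ ^ 2 = ∑ i, (x i) ^ 2 := by
  rw [EuclideanSpace.norm_eq, Real.sq_sqrt (by positivity)]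
  exact Finset.sum_congr rfl fun i _ => by rw [Real.norm_eq_abs, sq_abs]

/-- Expected one-step contraction toward a fixed point under i.i.d. Bernoulli
coordinate updates: each coordinate applies the relaxed update with probability
`1-p` independently; the expected squared distance to a fixed point `z*`
decreases by at least `(1-p) α (1-α) ‖T z - z‖²`. -/
theorem stmt18 (d : ℕ)
    (T : EuclideanSpace ℝ (Fin d) → EuclideanSpace ℝ (Fin d))
    (hT : ∀ x y, ‖T x - T y‖ ≤ ‖x - y‖)
    (zstar : EuclideanSpace ℝ (Fin d)) (hz : T zstar = zstar)
    (α : ℝ) (hα0 : 0 < α) (hα1 : α < 1)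
    (p : ℝ) (hp0 : 0 ≤ p) (hp1 : p < 1)
    (z : EuclideanSpace ℝ (Fin d)) :
    let u : EuclideanSpace ℝ (Fin d) := (1 - α) • z + α • T z
    let z' : Finset (Fin d) → EuclideanSpace ℝ (Fin d) :=
      fun S => WithLp.toLp 2 (fun i => if i ∈ S then u i else z i)
    ∑ S : Finset (Fin d),
        ((1 - p) ^ S.card * p ^ (d - S.card)) * ‖z' S - zstar‖ ^ 2 ≤
      ‖z - zstar‖ ^ 2 - (1 - p) * α * (1 - α) * ‖T z - z‖ ^ 2 := by
  intro u z'
  set SA : ℝ := ∑ i, (z i - zstar i) ^ 2 with hSA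
  set SC : ℝ := ∑ i, (T z i - zstar i) ^ 2 with hSC
  set SE : ℝ := ∑ i, (T z i - z i) ^ 2 with hSE
  have hA : ‖z - zstar‖ ^ 2 = SA := by
    rw [normsq]; exact Finset.sum_congr rfl fun i _ => rfl
  have hC : ‖T z - zstar‖ ^ 2 = SC := by
    rw [normsq]; exact Finset.sum_congr rfl fun i _ => rfl
  have hE : ‖T z - z‖ ^ 2 = SE := by
    rw [normsq]; exact Finset.sum_congr rfl fun i _ => rfl
  have hCA : SC ≤ SA := by
    rw [← hA, ← hC]
    have := hT z zstar
    rw [hz] at this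
    exact pow_le_pow_left₀ (norm_nonneg _) this 2
  have hsum : ∀ S : Finset (Fin d), ‖z' S - zstar‖ ^ 2
      = ∑ i, (if i ∈ S then (u i - zstar i) ^ 2 else (z i - zstar i) ^ 2) := by
    intro S
    rw [normsq]
    refine Finset.sum_congr rfl fun i _ => ?_
    have h1 : (z' S - zstar) i = z' S i - zstar i := rfl
    rw [h1]
    by_cases h : i ∈ S <;> simp [z', h]
  have hui : ∀ i, (u i - zstar i) ^ 2
      = (1 - α) * (z i - zstar i) ^ 2 + α * (T z i - zstar i) ^ 2
        - α * (1 - α) * (T z i - z i) ^ 2 := by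
    intro i
    have h1 : u i = (1 - α) * z i + α * T z i := rfl
    rw [h1]; ring
  have step : ∑ S : Finset (Fin d),
      ((1 - p) ^ S.card * p ^ (d - S.card)) * ‖z' S - zstar‖ ^ 2
      = ∑ i, ((1 - p) * (u i - zstar i) ^ 2 + p * (z i - zstar i) ^ 2) := by
    calc ∑ S : Finset (Fin d), ((1 - p) ^ S.card * p ^ (d - S.card)) * ‖z' S - zstar‖ ^ 2
        = ∑ S : Finset (Fin d), ∑ i, ((1 - p) ^ S.card * p ^ (d - S.card)) *
            (if i ∈ S then (u i - zstar i) ^ 2 else (z i - zstar i) ^ 2) := by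
          refine Finset.sum_congr rfl fun S _ => ?_
          rw [hsum S, Finset.mul_sum]
      _ = ∑ i, ∑ S : Finset (Fin d), ((1 - p) ^ S.card * p ^ (d - S.card)) *
            (if i ∈ S then (u i - zstar i) ^ 2 else (z i - zstar i) ^ 2) :=
          Finset.sum_comm
      _ = ∑ i, ((1 - p) * (u i - zstar i) ^ 2 + p * (z i - zstar i) ^ 2) :=
          Finset.sum_congr rfl fun i _ => aux2 d p i _ _
  have expand : ∑ i, ((1 - p) * (u i - zstar i) ^ 2 + p * (z i - zstar i) ^ 2)
      = (1 - p) * (1 - α) * SA + (1 - p) * α * SC - (1 - p) * α * (1 - α) * SE + p * SA := by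
    have h1 : ∀ i ∈ (Finset.univ : Finset (Fin d)),
        (1 - p) * (u i - zstar i) ^ 2 + p * (z i - zstar i) ^ 2
        = (1 - p) * (1 - α) * (z i - zstar i) ^ 2 + (1 - p) * α * (T z i - zstar i) ^ 2
          - (1 - p) * α * (1 - α) * (T z i - z i) ^ 2 + p * (z i - zstar i) ^ 2 := by
      intro i _
      rw [hui i]; ring
    rw [Finset.sum_congr rfl h1]
    simp only [Finset.sum_add_distrib, Finset.sum_sub_distrib, ← Finset.mul_sum]
    rfl
  have hSE0 : 0 ≤ SE := Finset.sum_nonneg fun i _ => sq_nonneg _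
  rw [step, expand, hA, hE]
  nlinarith [mul_nonneg (mul_nonneg (by linarith : (0:ℝ) ≤ 1 - p) hα0.le)
    (sub_nonneg.2 hCA)]
end
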